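/- Let a,b,c,d be real numbers with c ≠ 0, ad − bc ≠ 0, and Δ = (d−a)² + 4bc = 0. Let M be the Möbius transformation of ℝ ∪ {∞} extending t ↦ (at+b)/(ct+d). Then t₀ = (a−d)/(2c) is the unique fixed point of M in ℝ ∪ {∞}, and for every t ∈ ℝ ∪ {∞} the sequence of iterates Mⁿ(t) converges to t₀ in the topology of the one-point compactification. -/

import Mathlib

open OnePoint Filter Topology

/-- The Möbius transformation `t ↦ (a t + b)/(c t + d)` extended to the one-point
compactification `ℝ ∪ {∞}`, with `M(-d/c) = ∞` and `M(∞) = a/c`. -/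
noncomputable def mobius (a b c d : ℝ) (p : OnePoint ℝ) : OnePoint ℝ :=
  match p with
  | Option.none => ((a / c : ℝ) : OnePoint ℝ)
  | Option.some t =>
      if c * t + d = 0 then (∞ : OnePoint ℝ)
      else (((a * t + b) / (c * t + d) : ℝ) : OnePoint ℝ)

/-- If `c ≠ 0`, `ad - bc ≠ 0` and `Δ = (d-a)² + 4bc = 0`, then `t₀ = (a-d)/(2c)` is the
unique fixed point of the Möbius map on `ℝ ∪ {∞}`, and every orbit converges to `t₀`
in the topology of the one-point compactification. -/
theorem stmt_1 (a b c d : ℝ) (hc : c ≠ 0) (hdet : a * d - b * c ≠ 0)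
    (hΔ : (d - a) ^ 2 + 4 * b * c = 0) :
    (∀ q : OnePoint ℝ, mobius a b c d q = q ↔ q = (((a - d) / (2 * c) : ℝ) : OnePoint ℝ)) ∧
    (∀ q : OnePoint ℝ,
      Tendsto (fun n : ℕ => (mobius a b c d)^[n] q) atTop
        (nhds (((a - d) / (2 * c) : ℝ) : OnePoint ℝ))) := by
  have hs2 : (a + d) ^ 2 = 4 * (a * d - b * c) := by linear_combination hΔ
  have hs : a + d ≠ 0 := by
    intro h; apply hdet; nlinarith [hs2]
  set t₀ : ℝ := (a - d) / (2 * c) with ht₀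
  set k : ℝ := 2 * c / (a + d) with hk
  have hk0 : k ≠ 0 := div_ne_zero (mul_ne_zero two_ne_zero hc) hs
  have hct₀ : c * t₀ + d = (a + d) / 2 := by rw [ht₀]; field_simp; ring
  have hct₀0 : c * t₀ + d ≠ 0 := by rw [hct₀]; exact div_ne_zero hs two_ne_zero
  -- conjugating coordinate
  set g : ℝ → OnePoint ℝ := fun v => if v = 0 then (∞ : OnePoint ℝ) else ((t₀ + 1 / v : ℝ) : OnePoint ℝ) with hg
  have hkey : ∀ v : ℝ, mobius a b c d (g v) = g (v + k) := by
    intro v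
    by_cases hv : v = 0
    · subst hv
      have : g 0 = (∞ : OnePoint ℝ) := by simp [hg]
      rw [this]
      show ((a / c : ℝ) : OnePoint ℝ) = g (0 + k)
      rw [hg]
      simp only [zero_add, if_neg hk0]
      norm_cast
      rw [ht₀, hk]
      field_simp
      ring
    · have hgv : g v = ((t₀ + 1 / v : ℝ) : OnePoint ℝ) := by simp [hg, hv]
      rw [hgv]
      have hden : c * (t₀ + 1 / v) + d = (a + d) / 2 + c / v := by
        rw [ht₀]
        field_simp
        ring
      by_cases hvk : v + k = 0
      · have h0 : c * (t₀ + 1 / v) + d = 0 := by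
          rw [hden]
          have : v = -k := by linarith
          rw [this, hk]
          field_simp
          ring
        show mobius a b c d _ = _
        rw [hvk]
        simp only [mobius, if_pos h0, hg, if_pos rfl]
      · have h0 : c * (t₀ + 1 / v) + d ≠ 0 := by
          rw [hden]
          intro h
          apply hvk
          rw [hk]
          field_simp at h ⊢
          first | linear_combination -h | linear_combination 2 * h | linarith | nlinarith [h]
        show mobius a b c d _ = _
        simp only [mobius, if_neg h0, hg, if_neg hvk]
        norm_cast
        rw [div_eq_iff h0]
        have hvk' : v * (a + d) + 2 * c ≠ 0 := by
          intro h; apply hvk; rw [hk]; field_simp; linarith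
        rw [ht₀, hk]
        field_simp
        linear_combination ((a+d)*v + 2*c)*v * hΔ
  have hiter : ∀ (v : ℝ) (n : ℕ), (mobius a b c d)^[n] (g v) = g (v + n * k) := by
    intro v n
    induction n with
    | zero => simp
    | succ n ih =>
        rw [Function.iterate_succ_apply', ih, hkey]
        congr 1
        push_cast
        ring
  have hconv : ∀ v : ℝ, Tendsto (fun n : ℕ => g (v + n * k)) atTop (𝓝 ((t₀ : ℝ) : OnePoint ℝ)) := by
    intro v
    have hlin : Tendsto (fun n : ℕ => v + n * k) atTop atTop ∨
        Tendsto (fun n : ℕ => v + n * k) atTop atBot := by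
      rcases hk0.lt_or_gt with hneg | hpos
      · exact Or.inr (tendsto_atBot_add_const_left _ v
          (tendsto_natCast_atTop_atTop.atTop_mul_const_of_neg hneg))
      · exact Or.inl (tendsto_atTop_add_const_left _ v
          (tendsto_natCast_atTop_atTop.atTop_mul_const hpos))
    have hinv : Tendsto (fun n : ℕ => 1 / (v + n * k)) atTop (𝓝 0) := by
      rcases hlin with h | h
      · simpa [one_div, Pi.inv_def] using h.inv_tendsto_atTop
      · have hn : Tendsto (fun n : ℕ => -(v + n * k)) atTop atTop :=
          tendsto_neg_atBot_atTop.comp h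
        have h2 := hn.inv_tendsto_atTop.neg
        rw [neg_zero] at h2
        refine h2.congr fun n => ?_
        show -(-(v + n * k))⁻¹ = 1 / (v + n * k)
        rw [inv_neg, neg_neg, one_div]
    have hne : ∀ᶠ n : ℕ in atTop, v + n * k ≠ 0 := by
      rcases hlin with h | h
      · exact h.eventually_ne_atTop 0
      · exact h.eventually_ne_atBot 0
    have hreal : Tendsto (fun n : ℕ => (t₀ + 1 / (v + n * k) : ℝ)) atTop (𝓝 t₀) := by
      simpa using hinv.const_add t₀
    refine ((OnePoint.continuous_coe.tendsto t₀).comp hreal).congr' ?_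
    filter_upwards [hne] with n hn
    simp [hg, hn, Function.comp]
  constructor
  · -- fixed points
    intro q
    match q with
    | Option.none =>
        constructor
        · intro h
          exact absurd h (Option.some_ne_none _)
        · intro h
          exact absurd h.symm (Option.some_ne_none _)
    | Option.some t =>
        show mobius a b c d (Option.some t) = _ ↔ _
        by_cases hct : c * t + d = 0
        · simp only [mobius, if_pos hct]
          constructor
          · intro h
            exact absurd h.symm (Option.some_ne_none _)
          · intro h
            exfalso
            have ht : t = t₀ := Option.some.inj h
            exact hct₀0 (ht ▸ hct)
        · simp only [mobius, if_neg hct]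
          constructor
          · intro h
            have h' : (a * t + b) / (c * t + d) = t := Option.some.inj h
            rw [div_eq_iff hct] at h'
            have h2 : (2 * c * t - (a - d)) ^ 2 = 0 := by
              linear_combination (-4 * c) * h' + hΔ
            have h3 : 2 * c * t - (a - d) = 0 := by
              have := sq_eq_zero_iff.mp h2
              linarith
            have ht : t = t₀ := by
              rw [ht₀]
              field_simp
              linarith
            exact congrArg _ ht
          · intro h
            have ht : t = t₀ := Option.some.inj h
            have hr : (a * t + b) / (c * t + d) = t := by
              rw [div_eq_iff hct, ht, ht₀]
              field_simp
              first
              | linear_combination hΔ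
              | linear_combination -hΔ
              | linear_combination c * hΔ
              | linear_combination -c * hΔ
              | linear_combination (1/2 : ℝ) * hΔ
              | linear_combination (-1/2 : ℝ) * hΔ
              | nlinarith [hΔ]
            exact congrArg _ hr
  · -- convergence
    intro q
    match q with
    | Option.none =>
        have hinf : (Option.none : OnePoint ℝ) = g 0 := by
          simp only [hg, if_pos rfl]; rfl
        rw [hinf]
        exact (hconv 0).congr fun n => (hiter 0 n).symm
    | Option.some t =>
        by_cases ht : t = t₀
        · have hfix : mobius a b c d (Option.some t) = Option.some t := by
            simp only [mobius, if_neg (show ¬c * t + d = 0 from ht ▸ hct₀0)]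
            refine congrArg _ ?_
            rw [div_eq_iff (ht ▸ hct₀0), ht, ht₀]
            field_simp
            first
            | linear_combination hΔ
            | linear_combination -hΔ
            | linear_combination c * hΔ
            | linear_combination -c * hΔ
            | linear_combination (1/2 : ℝ) * hΔ
            | linear_combination (-1/2 : ℝ) * hΔ
            | nlinarith [hΔ]
          have hconst : ∀ n : ℕ, (mobius a b c d)^[n] (Option.some t) = Option.some t :=
            fun n => Function.iterate_fixed hfix n
          rw [show (fun n : ℕ => (mobius a b c d)^[n] (Option.some t))
              = fun _ : ℕ => (Option.some t : OnePoint ℝ) from funext hconst]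
          rw [show (Option.some t : OnePoint ℝ) = ((t₀ : ℝ) : OnePoint ℝ) from congrArg _ ht]
          exact tendsto_const_nhds
        · have hv0 : (1 : ℝ) / (t - t₀) ≠ 0 :=
            one_div_ne_zero (sub_ne_zero.mpr ht)
          have hgt : g (1 / (t - t₀)) = Option.some t := by
            simp only [hg, if_neg hv0]
            refine congrArg _ ?_
            rw [one_div_one_div]
            ring
          rw [← hgt]
          exact (hconv _).congr fun n => (hiter _ n).symm
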